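/- Let the network be a finite connected simple graph. If the initial state u₀ contains at least one seed, then all nodes are eventually n-periodic: there exists a time T such that u_{t+n}(x) = u_t(x) for every vertex x and every t ≥ T. -/

import Mathlib

/- The Greenberg–Hastings update rule on a simple graph `G` with state space `ZMod n`:
`𝒢u(x) = u(x)+1` if `u(x) ≠ 0`; `𝒢u(x) = 1` if `u(x) = 0` and some neighbor is in state `1`;
`𝒢u(x) = 0` otherwise. -/
open Classical in
noncomputable def ghUpdate {V : Type*} (n : ℕ) (G : SimpleGraph V) (u : V → ZMod n) :
    V → ZMod n :=
  fun x => if u x = 0 then (if ∃ y, G.Adj x y ∧ u y = 1 then 1 else 0) else u x + 1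
/- A state `u` has a seed: a closed walk `x₀, …, x_K = x₀` with `u (x i) = i mod n`. -/
def hasSeed {V : Type*} (n : ℕ) (G : SimpleGraph V) (u : V → ZMod n) : Prop :=
  ∃ (K : ℕ) (x : ℕ → V), 1 ≤ K ∧ x K = x 0 ∧ (∀ i < K, G.Adj (x i) (x (i + 1))) ∧
    ∀ i ≤ K, u (x i) = (i : ZMod n)


namespace GH
variable {V : Type*} {n : ℕ} {G : SimpleGraph V} {u : V → ZMod n}
noncomputable def traj (n : ℕ) (G : SimpleGraph V) (u₀ : V → ZMod n) (t : ℕ) : V → ZMod n :=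
  (ghUpdate n G)^[t] u₀
lemma traj_succ (u₀ : V → ZMod n) (t : ℕ) :
    traj n G u₀ (t+1) = ghUpdate n G (traj n G u₀ t) := Function.iterate_succ_apply' _ _ _
lemma gh_ne {x : V} (h : u x ≠ 0) : ghUpdate n G u x = u x + 1 := by
  simp [ghUpdate, h]
lemma gh_fire {x y : V} (h : u x = 0) (hxy : G.Adj x y) (hy : u y = 1) :
    ghUpdate n G u x = 1 := by
  simp only [ghUpdate, h, if_true, eq_self_iff_true]
  rw [if_pos ⟨y, hxy, hy⟩]
lemma gh_zero_or {x : V} (h : u x = 0) :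
    ghUpdate n G u x = 0 ∨ ghUpdate n G u x = 1 := by
  simp only [ghUpdate]
  rw [if_pos h]
  by_cases he : ∃ y, G.Adj x y ∧ u y = 1
  · right; rw [if_pos he]
  · left; rw [if_neg he]
lemma natCast_ne_zero {m : ℕ} (h1 : 0 < m) (h2 : m < n) : (m : ZMod n) ≠ 0 := by
  rw [Ne, ZMod.natCast_eq_zero_iff]
  intro hd
  exact absurd (Nat.le_of_dvd h1 hd) (by omega)
lemma natCast_ne_one (hn : 2 ≤ n) {m : ℕ} (h1 : 2 ≤ m) (h2 : m ≤ n) : (m : ZMod n) ≠ 1 := by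
  haveI : Fact (1 < n) := ⟨by omega⟩
  rcases eq_or_lt_of_le h2 with rfl | hlt
  · rw [ZMod.natCast_self]; exact zero_ne_one
  · intro h
    rw [show (1 : ZMod n) = ((1:ℕ) : ZMod n) by push_cast; ring,
      ZMod.natCast_eq_natCast_iff] at h
    have h3 := Nat.mod_eq_of_lt hlt
    have h4 := Nat.mod_eq_of_lt (show 1 < n by omega)
    unfold Nat.ModEq at h
    omega
lemma fwd {u₀ : V → ZMod n} {x : V} {s : ℕ} (h : traj n G u₀ s x = 1)
    {j : ℕ} (hj : j < n) : traj n G u₀ (s + j) x = ((j + 1 : ℕ) : ZMod n) := by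
  induction j with
  | zero => simpa using h
  | succ j ih =>
    have h1 : traj n G u₀ (s + j) x = ((j+1 : ℕ) : ZMod n) := ih (by omega)
    have hne : traj n G u₀ (s + j) x ≠ 0 := by
      rw [h1]; exact natCast_ne_zero (by omega) (by omega)
    have h2 : traj n G u₀ (s + (j+1)) x = traj n G u₀ (s+j) x + 1 := by
      rw [show s + (j+1) = (s+j)+1 by ring, traj_succ]; exact gh_ne hne
    rw [h2, h1]; push_cast; ring
lemma zero_run {u₀ : V → ZMod n} {x : V} {s : ℕ} (h : traj n G u₀ s x = 0) (m : ℕ)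
    (hno : ∀ i, i < m → traj n G u₀ (s + i + 1) x ≠ 1) : traj n G u₀ (s + m) x = 0 := by
  induction m with
  | zero => simpa using h
  | succ m ih =>
    have h0 : traj n G u₀ (s+m) x = 0 := ih (fun i hi => hno i (by omega))
    have h2 := gh_zero_or (G := G) (u := traj n G u₀ (s+m)) (x := x) h0
    rw [← traj_succ] at h2
    rcases h2 with h' | h'
    · exact h'
    · exact absurd h' (hno m (by omega))
lemma bwd (hn : 2 ≤ n) {u₀ : V → ZMod n} {x : V} :
    ∀ j, j + 2 ≤ n → ∀ s, j ≤ s → traj n G u₀ s x = ((j + 1 : ℕ) : ZMod n) →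
      traj n G u₀ (s - j) x = 1 := by
  intro j
  induction j with
  | zero => intro _ s _ h; simpa using h
  | succ j ih =>
    intro hj s hs h
    obtain ⟨s', rfl⟩ : ∃ s', s = s' + 1 := ⟨s - 1, by omega⟩
    rw [traj_succ] at h
    by_cases h0 : traj n G u₀ s' x = 0
    · rcases gh_zero_or h0 with h' | h' <;> rw [h'] at h
      · exact absurd h.symm (natCast_ne_zero (by omega) (by omega))
      · exact absurd h.symm (natCast_ne_one hn (by omega) (by omega))
    · rw [gh_ne h0] at h
      have h1 : traj n G u₀ s' x = ((j+1 : ℕ) : ZMod n) := by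
        push_cast at h ⊢
        linear_combination h
      have h2 := ih (by omega) s' (by omega) h1
      rwa [show s' + 1 - (j+1) = s' - j by omega]

lemma modeq_eq_of_lt {a b m : ℕ} (h : a ≡ b [MOD m]) (ha : a < m) (hb : b < m) : a = b := by
  rwa [Nat.ModEq, Nat.mod_eq_of_lt ha, Nat.mod_eq_of_lt hb] at h

lemma modeq_close {a b m : ℕ} (h : a ≡ b [MOD m]) (h1 : b < a + m) (h2 : a < b + m) :
    a = b := by
  rcases h.dvd with ⟨t, ht⟩
  have h3 : (b : ℤ) - a = m * t := ht
  have h4 : t = 0 := by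
    rcases lt_trichotomy t 0 with h' | h' | h'
    · nlinarith [h3, h1, h2]
    · exact h'
    · nlinarith [h3, h1, h2]
  rw [h4, mul_zero] at h3
  omega

lemma prop_step (hn : 2 ≤ n) {u₀ : V → ZMod n} {x y : V} (hxy : G.Adj x y)
    {T : ℕ} {c : ZMod n} (hy : ∀ t, T ≤ t → traj n G u₀ t y = (t : ZMod n) + c) :
    ∃ (T' : ℕ) (c' : ZMod n), ∀ t, T' ≤ t → traj n G u₀ t x = (t : ZMod n) + c' := by
  haveI : NeZero n := ⟨by omega⟩
  obtain ⟨t₀, ht₀T, ht₀n, ht₀c⟩ : ∃ t₀, T ≤ t₀ ∧ n ≤ t₀ ∧ (t₀ : ZMod n) = 1 - c := by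
    have hTn : T + n ≤ n * (T + n) := Nat.le_mul_of_pos_left _ (by omega)
    refine ⟨n * (T + n) + (1 - c).val, by omega, by omega, ?_⟩
    push_cast
    rw [ZMod.natCast_self, ZMod.natCast_zmod_val]
    ring
  -- y fires at t₀ + k*n for all k
  have hy1 : ∀ k, traj n G u₀ (t₀ + k * n) y = 1 := by
    intro k
    rw [hy _ (by omega)]
    push_cast
    rw [ZMod.natCast_self, ht₀c]
    ring
  -- x fires arbitrarily late
  have ex1 : ∀ s : ℕ, ∃ s', s ≤ s' ∧ traj n G u₀ s' x = 1 := by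
    intro s
    have hsn : s ≤ s * n := Nat.le_mul_of_pos_right _ (by omega)
    have hτ : s + n ≤ t₀ + s * n := by omega
    by_cases h0 : traj n G u₀ (t₀ + s * n) x = 0
    · refine ⟨t₀ + s * n + 1, by omega, ?_⟩
      rw [traj_succ]
      exact gh_fire h0 hxy (hy1 s)
    · set m := (traj n G u₀ (t₀ + s * n) x).val with hm
      have hm1 : 1 ≤ m := by
        rcases Nat.eq_zero_or_pos m with h | h
        · exact absurd ((ZMod.val_eq_zero _).1 h) h0
        · exact h
      have hm2 : m < n := ZMod.val_lt _
      have hmc : traj n G u₀ (t₀ + s * n) x = ((m : ℕ) : ZMod n) :=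
        (ZMod.natCast_zmod_val _).symm
      have hb := bwd hn (m-1) (by omega) (t₀ + s * n) (by omega)
        (by rw [show m - 1 + 1 = m by omega]; exact hmc)
      exact ⟨t₀ + s * n - (m-1), by omega, hb⟩
  -- gap: no firing within n steps after a firing
  have hgap : ∀ s j, traj n G u₀ s x = 1 → 0 < j → j < n → traj n G u₀ (s + j) x ≠ 1 := by
    intro s j hs hj1 hj2
    rw [fwd hs hj2]
    exact natCast_ne_one hn (by omega) (by omega)
  -- step bound
  have hstep : ∀ s, t₀ ≤ s → traj n G u₀ s x = 1 →
      ∃ s' k, traj n G u₀ s' x = 1 ∧ s + n ≤ s' ∧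
        s + n - 1 ≤ t₀ + k * n ∧ t₀ + k * n ≤ s + 2*n - 2 ∧ s' ≤ t₀ + k * n + 1 := by
    intro s hst₀ hs1
    obtain ⟨k, hk1, hk2⟩ : ∃ k, s + n - 1 ≤ t₀ + k * n ∧ t₀ + k * n ≤ s + 2*n - 2 := by
      set d := s + n - 1 - t₀ with hd
      refine ⟨(d + n - 1) / n, ?_, ?_⟩ <;>
      · have hdm := Nat.div_add_mod (d + n - 1) n
        have hlt := Nat.mod_lt (d + n - 1) (show 0 < n by omega)
        have hmul : (d + n - 1) / n * n = n * ((d + n - 1) / n) := mul_comm _ _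
        omega
    have hzero : traj n G u₀ (s + (n-1)) x = 0 := by
      rw [fwd hs1 (show n - 1 < n by omega), show n - 1 + 1 = n by omega, ZMod.natCast_self]
    by_cases hex : ∃ i, i < (t₀ + k * n) - (s + n - 1) ∧ traj n G u₀ (s + (n-1) + i + 1) x = 1
    · obtain ⟨i, hi, hfire⟩ := hex
      exact ⟨s + (n-1) + i + 1, k, hfire, by omega, hk1, hk2, by omega⟩
    · push_neg at hex
      have h0τ : traj n G u₀ (t₀ + k * n) x = 0 := by
        have hz := zero_run hzero ((t₀ + k * n) - (s + n - 1)) hex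
        rwa [show s + (n-1) + ((t₀ + k * n) - (s + n - 1)) = t₀ + k * n by omega] at hz
      have hf : traj n G u₀ (t₀ + k * n + 1) x = 1 := by
        rw [traj_succ]
        exact gh_fire h0τ hxy (hy1 k)
      exact ⟨t₀ + k * n + 1, k, hf, by omega, hk1, hk2, le_rfl⟩
  -- the sequence of firing times
  let nxt : ℕ → ℕ := fun s => Nat.find (ex1 s)
  have hnxt_ge : ∀ s, s ≤ nxt s := fun s => (Nat.find_spec (ex1 s)).1
  have hnxt_fire : ∀ s, traj n G u₀ (nxt s) x = 1 := fun s => (Nat.find_spec (ex1 s)).2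
  have hnxt_min : ∀ s s', s ≤ s' → traj n G u₀ s' x = 1 → nxt s ≤ s' :=
    fun s s' h1 h2 => Nat.find_min' (ex1 s) ⟨h1, h2⟩
  let S : ℕ → ℕ := fun k => Nat.rec (nxt t₀) (fun _ prev => nxt (prev + 1)) k
  have hSsucc : ∀ k, S (k+1) = nxt (S k + 1) := fun k => rfl
  have hS1 : ∀ k, traj n G u₀ (S k) x = 1 := by
    intro k
    cases k with
    | zero => exact hnxt_fire t₀
    | succ k => exact hnxt_fire _
  have hSt₀ : ∀ k, t₀ ≤ S k := by
    intro k
    induction k with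
    | zero => exact hnxt_ge t₀
    | succ k ih => exact le_trans ih (le_trans (by omega) (hnxt_ge (S k + 1)))
  have hlow : ∀ k, S k + n ≤ S (k+1) := by
    intro k
    have hge : S k + 1 ≤ S (k+1) := hnxt_ge (S k + 1)
    by_contra hcon
    exact hgap (S k) (S (k+1) - S k) (hS1 k) (by omega) (by omega)
      (by rw [show S k + (S (k+1) - S k) = S (k+1) by omega]; exact hS1 (k+1))
  -- phase residue
  let r : ℕ → ℕ := fun k => (t₀ + 1 + (n - 1) * S k) % n
  have hrlt : ∀ k, r k < n := fun k => Nat.mod_lt _ (by omega)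
  have hrmod : ∀ k, S k + r k ≡ t₀ + 1 [MOD n] := by
    intro k
    have h1 : r k ≡ t₀ + 1 + (n - 1) * S k [MOD n] := Nat.mod_modEq _ _
    have h2 : S k + r k ≡ S k + (t₀ + 1 + (n - 1) * S k) [MOD n] := h1.add_left _
    have h3 : S k + (t₀ + 1 + (n - 1) * S k) = t₀ + 1 + n * S k := by
      have hn1 : n - 1 + 1 = n := by omega
      calc S k + (t₀ + 1 + (n - 1) * S k) = t₀ + 1 + ((n-1) + 1) * S k := by ring
        _ = t₀ + 1 + n * S k := by rw [hn1]
    rw [h3] at h2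
    calc S k + r k ≡ t₀ + 1 + n * S k [MOD n] := h2
      _ ≡ t₀ + 1 + 0 [MOD n] := Nat.ModEq.add_left _ (Nat.modEq_zero_iff_dvd.2 ⟨S k, rfl⟩)
      _ = t₀ + 1 := by ring
  -- upper bound : S (k+1) ≤ S k + n + r k
  have hupp : ∀ k, S (k+1) ≤ S k + n + r k := by
    intro k
    obtain ⟨s', k', hf, hge, hτ1, hτ2, hle⟩ := hstep (S k) (hSt₀ k) (hS1 k)
    have hnle : S (k+1) ≤ s' := by
      rw [hSsucc]
      exact hnxt_min _ _ (by omega) hf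
    have he : t₀ + k' * n + 1 - (S k + n) = r k := by
      have he1 : t₀ + k' * n + 1 - (S k + n) < n := by omega
      have hc1 : (t₀ + k' * n + 1 - (S k + n)) + (S k + n) ≡ t₀ + 1 [MOD n] := by
        rw [show (t₀ + k' * n + 1 - (S k + n)) + (S k + n) = t₀ + k' * n + 1 by omega]
        calc t₀ + k' * n + 1 = (t₀ + 1) + n * k' := by ring
          _ ≡ (t₀ + 1) + 0 [MOD n] := Nat.ModEq.add_left _ (Nat.modEq_zero_iff_dvd.2 ⟨k', rfl⟩)
          _ = t₀ + 1 := by ring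
      have hc2 : r k + (S k + n) ≡ t₀ + 1 [MOD n] := by
        calc r k + (S k + n) = (S k + r k) + n * 1 := by ring
          _ ≡ (t₀ + 1) + 0 [MOD n] := (hrmod k).add (Nat.modEq_zero_iff_dvd.2 ⟨1, rfl⟩)
          _ = t₀ + 1 := by ring
      exact modeq_eq_of_lt ((hc1.trans hc2.symm).add_right_cancel' _) he1 (hrlt k)
    omega
  -- the recurrence : S(k+1) + r(k+1) = S k + n + r k
  have hrec : ∀ k, S (k+1) + r (k+1) = S k + n + r k := by
    intro k
    have hB : S k + n + r k ≡ t₀ + 1 [MOD n] := by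
      calc S k + n + r k = (S k + r k) + n * 1 := by ring
        _ ≡ (t₀ + 1) + 0 [MOD n] := (hrmod k).add (Nat.modEq_zero_iff_dvd.2 ⟨1, rfl⟩)
        _ = t₀ + 1 := by ring
    have h1 := hlow k
    have h2 := hupp k
    have h3 := hrlt k
    have h4 := hrlt (k+1)
    exact modeq_close ((hrmod (k+1)).trans hB.symm) (by omega) (by omega)
  have hrdec : ∀ k, r (k+1) ≤ r k := by
    intro k
    have := hrec k
    have := hlow k
    omega
  have hrle : ∀ j k, j ≤ k → r k ≤ r j := by
    intro j k hjk
    induction k with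
    | zero =>
      have hj0 : j = 0 := by omega
      exact hj0 ▸ le_rfl
    | succ k ih =>
      rcases Nat.lt_or_ge j (k+1) with h | h
      · exact le_trans (hrdec k) (ih (by omega))
      · have : j = k + 1 := by omega
        rw [this]
  obtain ⟨k₀, hk₀⟩ : ∃ k₀, r k₀ = sInf (Set.range r) :=
    Nat.sInf_mem (Set.range_nonempty r)
  have hconst : ∀ k, k₀ ≤ k → r k = r k₀ := by
    intro k hk
    refine le_antisymm (hrle k₀ k hk) ?_
    rw [hk₀]
    exact Nat.sInf_le ⟨k, rfl⟩
  have hSstep : ∀ k, k₀ ≤ k → S (k+1) = S k + n := by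
    intro k hk
    have h1 := hrec k
    have h2 := hconst k hk
    have h3 := hconst (k+1) (by omega)
    omega
  have hSlin : ∀ q, S (k₀ + q) = S k₀ + n * q := by
    intro q
    induction q with
    | zero => simp
    | succ q ih =>
      rw [show k₀ + (q+1) = (k₀ + q) + 1 by ring, hSstep _ (by omega), ih]
      ring
  refine ⟨S k₀, (1 : ZMod n) - (Nat.cast (S k₀) : ZMod n), ?_⟩
  intro t ht
  have hdm := Nat.div_add_mod (t - S k₀) n
  have hj : (t - S k₀) % n < n := Nat.mod_lt _ (by omega)
  have hts : t = S k₀ + n * ((t - S k₀) / n) + (t - S k₀) % n := by omega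
  have hfq : traj n G u₀ (S k₀ + n * ((t - S k₀) / n)) x = 1 := by
    have h := hS1 (k₀ + (t - S k₀) / n)
    rwa [hSlin ((t - S k₀) / n)] at h
  have hv := fwd hfq hj
  rw [hts, hv]
  push_cast
  rw [ZMod.natCast_self]
  ring

lemma seed_invariant (hn : 2 ≤ n) {u₀ : V → ZMod n} (hseed : hasSeed n G u₀) :
    ∃ z : V, ∀ t : ℕ, traj n G u₀ t z = (t : ZMod n) := by
  obtain ⟨K, x, hK, hclosed, hadj, hval⟩ := hseed
  have hnK : (K : ZMod n) = 0 := by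
    have h0 := hval 0 (by omega)
    have hK' := hval K le_rfl
    rw [hclosed, h0] at hK'
    simpa using hK'.symm
  have hdvd : n ∣ K := (ZMod.natCast_eq_zero_iff _ _).1 hnK
  have hK2 : 2 ≤ K := by
    rcases hdvd with ⟨c, rfl⟩
    rcases Nat.eq_zero_or_pos c with rfl | hc
    · omega
    · nlinarith
  set x' : ℕ → V := fun i => x (i % K) with hx'
  have hmod : ∀ i : ℕ, i % K < K := fun i => Nat.mod_lt _ (by omega)
  have hx'val : ∀ i, u₀ (x' i) = (i : ZMod n) := by
    intro i
    have h1 := hval (i % K) (le_of_lt (hmod i))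
    show u₀ (x (i % K)) = (i : ZMod n)
    rw [h1]
    conv_rhs => rw [← Nat.div_add_mod i K]
    push_cast
    rw [hnK]
    ring
  have hx'adj : ∀ i, G.Adj (x' i) (x' (i+1)) := by
    intro i
    have h2 := hadj (i % K) (hmod i)
    have hstep : x' (i+1) = x (i % K + 1) := by
      show x ((i+1) % K) = x (i % K + 1)
      have hadd : (i+1) % K = (i % K + 1) % K := by
        conv_lhs => rw [Nat.add_mod, Nat.mod_eq_of_lt (show 1 < K by omega)]
      by_cases hc : i % K + 1 = K
      · rw [hadd, hc, Nat.mod_self, ← hc, ← hclosed, hc]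
      · rw [hadd, Nat.mod_eq_of_lt (by have := hmod i; omega)]
    rw [hstep]
    exact h2
  have hinv : ∀ t i, traj n G u₀ t (x' i) = ((i + t : ℕ) : ZMod n) := by
    intro t
    induction t with
    | zero => intro i; simpa [traj] using hx'val i
    | succ t ih =>
      intro i
      have hi := ih i
      have hi1 := ih (i+1)
      rw [traj_succ]
      by_cases hz : ((i + t : ℕ) : ZMod n) = 0
      · have hy1 : traj n G u₀ t (x' (i+1)) = 1 := by
          rw [hi1]
          push_cast at hz ⊢
          rw [show ((i:ZMod n) + 1 + t) = ((i:ZMod n) + t) + 1 by ring, hz]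
          ring
        rw [gh_fire (hi.trans hz) (hx'adj i) hy1]
        push_cast at hz ⊢
        rw [show ((i:ZMod n) + (t + 1)) = ((i:ZMod n) + t) + 1 by ring, hz]
        ring
      · rw [gh_ne (fun h => hz (hi ▸ h))]
        rw [hi]
        push_cast
        ring
  exact ⟨x' 0, fun t => by simpa using hinv t 0⟩

lemma prop_walk (hn : 2 ≤ n) {u₀ : V → ZMod n} :
    ∀ {a b : V} (_ : G.Walk a b),
      (∃ T c, ∀ t, T ≤ t → traj n G u₀ t a = (t : ZMod n) + c) →
      (∃ T c, ∀ t, T ≤ t → traj n G u₀ t b = (t : ZMod n) + c) := by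
  intro a b p
  induction p with
  | nil => exact id
  | cons h p ih =>
    intro ⟨T, c, hT⟩
    exact ih (prop_step hn h.symm hT)

end GH

theorem stmt_4 {V : Type*} [Fintype V] (n : ℕ) (hn : 2 ≤ n) (G : SimpleGraph V)
    (hconn : G.Connected) (u₀ : V → ZMod n) (hseed : hasSeed n G u₀) :
    ∃ T : ℕ, ∀ (x : V) (t : ℕ), T ≤ t →
      (ghUpdate n G)^[t + n] u₀ x = (ghUpdate n G)^[t] u₀ x := by
  classical
  obtain ⟨z, hz⟩ := GH.seed_invariant hn hseed
  have hall : ∀ x : V, ∃ T c, ∀ t, T ≤ t → GH.traj n G u₀ t x = (t : ZMod n) + c := by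
    intro x
    obtain ⟨p⟩ := hconn.preconnected z x
    exact GH.prop_walk hn p ⟨0, 0, fun t _ => by rw [hz t]; ring⟩
  choose Tf cf hf using hall
  refine ⟨Finset.univ.sup Tf, fun x t ht => ?_⟩
  have hTx : Tf x ≤ t := le_trans (Finset.le_sup (Finset.mem_univ x)) ht
  have h1 := hf x t hTx
  have h2 := hf x (t + n) (by omega)
  show GH.traj n G u₀ (t + n) x = GH.traj n G u₀ t x
  rw [h1, h2]
  push_cast
  rw [ZMod.natCast_self]
  ring
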